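/- Let A ⊆ ℝ be an invex set with respect to η : A × A → ℝ satisfying Condition C. Then for every x, y ∈ A and every t₁, t₂ ∈ [0,1]: η(y + t₂η(x,y), y + t₁η(x,y)) = (t₂ − t₁) η(x,y). -/

import Mathlib

open Set

/-- Consequence of Condition C: for all `x, y` in an invex set
and `t₁, t₂ ∈ [0,1]`, `η(y + t₂η(x,y), y + t₁η(x,y)) = (t₂ − t₁)η(x,y)`. -/
theorem conditionC_eta_eq
    (A : Set ℝ) (η : ℝ → ℝ → ℝ)
    (hinv : ∀ x ∈ A, ∀ y ∈ A, ∀ t ∈ Icc (0:ℝ) 1, x + t * η y x ∈ A)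
    (hC : ∀ x ∈ A, ∀ y ∈ A, ∀ t ∈ Icc (0:ℝ) 1,
      η y (y + t * η x y) = -t * η x y ∧ η x (y + t * η x y) = (1 - t) * η x y) :
    ∀ x ∈ A, ∀ y ∈ A, ∀ t₁ ∈ Icc (0:ℝ) 1, ∀ t₂ ∈ Icc (0:ℝ) 1,
      η (y + t₂ * η x y) (y + t₁ * η x y) = (t₂ - t₁) * η x y := by
  intro x hx y hy t₁ ht₁ t₂ ht₂
  obtain ⟨h10, h11⟩ := ht₁
  obtain ⟨h20, h21⟩ := ht₂
  set w := y + t₂ * η x y with hw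
  have hwA : w ∈ A := hinv y hy x hx t₂ ⟨h20, h21⟩
  rcases le_total t₂ t₁ with hle | hle
  · -- use η(x, w) = (1 - t₂) η(x, y)
    have hxw : η x w = (1 - t₂) * η x y := (hC x hx y hy t₂ ⟨h20, h21⟩).2
    by_cases h1 : t₂ = 1
    · have ht1 : t₁ = 1 := le_antisymm h11 (h1 ▸ hle)
      have key := (hC x hx w hwA 0 ⟨le_refl 0, zero_le_one⟩).1
      simp only [zero_mul, add_zero, neg_zero] at key
      rw [ht1, h1]
      simpa [hw, h1] using key
    · have hne : (1 : ℝ) - t₂ ≠ 0 := sub_ne_zero.mpr (Ne.symm h1)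
      have hpos : (0 : ℝ) < 1 - t₂ := lt_of_le_of_ne (sub_nonneg.mpr h21) (Ne.symm hne)
      set t := (t₁ - t₂) / (1 - t₂) with htdef
      have ht0 : 0 ≤ t := div_nonneg (sub_nonneg.mpr hle) hpos.le
      have ht1 : t ≤ 1 := (div_le_one hpos).mpr (by linarith)
      have key := (hC x hx w hwA t ⟨ht0, ht1⟩).1
      rw [hxw] at key
      have harg : w + t * ((1 - t₂) * η x y) = y + t₁ * η x y := by
        rw [hw, htdef]; field_simp; ring
      rw [harg] at key
      rw [key, htdef]; field_simp; ring
  · -- use η(y, w) = -t₂ η(x, y)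
    have hyw : η y w = -t₂ * η x y := (hC x hx y hy t₂ ⟨h20, h21⟩).1
    by_cases h0 : t₂ = 0
    · have ht1 : t₁ = 0 := le_antisymm (h0 ▸ hle) h10
      have key := (hC x hx w hwA 0 ⟨le_refl 0, zero_le_one⟩).1
      simp only [zero_mul, add_zero, neg_zero] at key
      rw [ht1, h0]
      simpa [hw, h0] using key
    · have hpos : (0 : ℝ) < t₂ := lt_of_le_of_ne h20 (Ne.symm h0)
      set t := (t₂ - t₁) / t₂ with htdef
      have ht0 : 0 ≤ t := div_nonneg (sub_nonneg.mpr hle) hpos.le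
      have ht1 : t ≤ 1 := (div_le_one hpos).mpr (by linarith)
      have key := (hC y hy w hwA t ⟨ht0, ht1⟩).1
      rw [hyw] at key
      have harg : w + t * (-t₂ * η x y) = y + t₁ * η x y := by
        rw [hw, htdef]; field_simp; ring
      rw [harg] at key
      rw [key, htdef]; field_simp
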